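/- Let α, N, M, k be natural numbers. Let 𝔄 = (g_1,…,g_k) be a family of invertible (α+N)×(α+N) complex matrices and 𝔓 = (h_1,…,h_k) a family of invertible (α+M)×(α+M) complex matrices, regarded as multiple colligations, and let 𝔄∘𝔓 = (g_1∘h_1,…,g_k∘h_k) be their elementwise colligation product (a family of (α+(N+M))×(α+(N+M)) matrices). Let S, R be k×k complex matrices such that the matrices E(𝔄;S,R) and E(𝔓;S,R) are invertible. Then E(𝔄∘𝔓; S,R) is invertible and the two-variable characteristic functions satisfy χ(𝔄∘𝔓; S, R) = χ(𝔄; S, R) · χ(𝔓; S, R). -/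

import Mathlib

open Matrix

/-- Block-diagonal matrix `ã` of the `a`-blocks of a multiple colligation. -/
noncomputable def aT {k : ℕ} {A I : Type*} [DecidableEq (Fin k)]
    (g : Fin k → Matrix (A ⊕ I) (A ⊕ I) ℂ) : Matrix (A × Fin k) (A × Fin k) ℂ :=
  blockDiagonal fun j => (g j).toBlocks₁₁

/-- Block-diagonal matrix `b̃` of the `b`-blocks of a multiple colligation. -/
noncomputable def bT {k : ℕ} {A I : Type*}
    (g : Fin k → Matrix (A ⊕ I) (A ⊕ I) ℂ) : Matrix (A × Fin k) (I × Fin k) ℂ :=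
  blockDiagonal fun j => (g j).toBlocks₁₂

/-- Block-diagonal matrix `c̃` of the `c`-blocks of a multiple colligation. -/
noncomputable def cT {k : ℕ} {A I : Type*}
    (g : Fin k → Matrix (A ⊕ I) (A ⊕ I) ℂ) : Matrix (I × Fin k) (A × Fin k) ℂ :=
  blockDiagonal fun j => (g j).toBlocks₂₁

/-- Block-diagonal matrix `d̃` of the `d`-blocks of a multiple colligation. -/
noncomputable def dT {k : ℕ} {A I : Type*}
    (g : Fin k → Matrix (A ⊕ I) (A ⊕ I) ℂ) : Matrix (I × Fin k) (I × Fin k) ℂ :=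
  blockDiagonal fun j => (g j).toBlocks₂₂

/-- `S̃`: the Kronecker-type block matrix whose `(i,j)` block is `s_{ij} · 1`. -/
def sT {k : ℕ} (I : Type*) [DecidableEq I] (S : Matrix (Fin k) (Fin k) ℂ) :
    Matrix (I × Fin k) (I × Fin k) ℂ :=
  Matrix.of fun p q => if p.1 = q.1 then S p.2 q.2 else 0

/-- The multivariate characteristic function `χ(𝔄; S) = ã + b̃·(S̃ − d̃)⁻¹·c̃`. -/
noncomputable def chiM {k : ℕ} {A I : Type*} [Fintype A] [Fintype I] [DecidableEq I]
    (g : Fin k → Matrix (A ⊕ I) (A ⊕ I) ℂ) (S : Matrix (Fin k) (Fin k) ℂ) :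
    Matrix (A × Fin k) (A × Fin k) ℂ :=
  aT g + bT g * (sT I S - dT g)⁻¹ * cT g

/-- The family of inverse-transpose matrices `g_j' = (g_jᵗ)⁻¹`. -/
noncomputable def gP {k : ℕ} {A I : Type*} [Fintype A] [Fintype I]
    [DecidableEq A] [DecidableEq I]
    (g : Fin k → Matrix (A ⊕ I) (A ⊕ I) ℂ) : Fin k → Matrix (A ⊕ I) (A ⊕ I) ℂ :=
  fun j => ((g j)ᵀ)⁻¹

/-- `E(𝔄; S, R) = d̃ − S̃·d̃'·R̃`, where `d̃'` is the block-diagonal matrix of the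
`d`-blocks of the inverse transposes `(g_jᵗ)⁻¹`. -/
noncomputable def EMat {k : ℕ} {A I : Type*} [Fintype A] [Fintype I]
    [DecidableEq A] [DecidableEq I]
    (g : Fin k → Matrix (A ⊕ I) (A ⊕ I) ℂ) (S R : Matrix (Fin k) (Fin k) ℂ) :
    Matrix (I × Fin k) (I × Fin k) ℂ :=
  dT g - sT I S * dT (gP g) * sT I R

/-- The two-variable characteristic function `χ(𝔄; S, R)`, a `2 × 2` block matrix with
blocks of size `kα`:
`[[ã − b̃·E⁻¹·c̃, b̃·E⁻¹·S̃·c̃'], [−b̃'·R̃·E⁻¹·c̃, ã' + b̃'·R̃·E⁻¹·S̃·c̃']]`. -/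
noncomputable def chi2v {k : ℕ} {A I : Type*} [Fintype A] [Fintype I]
    [DecidableEq A] [DecidableEq I]
    (g : Fin k → Matrix (A ⊕ I) (A ⊕ I) ℂ) (S R : Matrix (Fin k) (Fin k) ℂ) :
    Matrix ((A × Fin k) ⊕ (A × Fin k)) ((A × Fin k) ⊕ (A × Fin k)) ℂ :=
  fromBlocks
    (aT g - bT g * (EMat g S R)⁻¹ * cT g)
    (bT g * (EMat g S R)⁻¹ * sT I S * cT (gP g))
    (-(bT (gP g) * sT I R * (EMat g S R)⁻¹ * cT g))
    (aT (gP g) + bT (gP g) * sT I R * (EMat g S R)⁻¹ * sT I S * cT (gP g))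

/-- The product of operator colligations. -/
noncomputable def colProd {A I J : Type*} [Fintype A]
    (g : Matrix (A ⊕ I) (A ⊕ I) ℂ) (h : Matrix (A ⊕ J) (A ⊕ J) ℂ) :
    Matrix (A ⊕ (I ⊕ J)) (A ⊕ (I ⊕ J)) ℂ :=
  fromBlocks (g.toBlocks₁₁ * h.toBlocks₁₁)
    (fromCols g.toBlocks₁₂ (g.toBlocks₁₁ * h.toBlocks₁₂))
    (fromRows (g.toBlocks₂₁ * h.toBlocks₁₁) h.toBlocks₂₁)
    (fromBlocks g.toBlocks₂₂ (g.toBlocks₂₁ * h.toBlocks₁₂) 0 h.toBlocks₂₂)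

namespace Chi2vAux

set_option linter.unusedSectionVars false

section Emb
variable {A I J : Type*} [Fintype A] [Fintype I] [Fintype J]
  [DecidableEq A] [DecidableEq I] [DecidableEq J]

/-- embedding `g ↦ g ⊕ 1_J` into matrices over `A ⊕ (I ⊕ J)`. -/
noncomputable def GE (m : Matrix (A ⊕ I) (A ⊕ I) ℂ) :
    Matrix (A ⊕ (I ⊕ J)) (A ⊕ (I ⊕ J)) ℂ :=
  submatrix (fromBlocks m 0 0 (1 : Matrix J J ℂ))
    (Equiv.sumAssoc A I J).symm (Equiv.sumAssoc A I J).symm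

/-- the reindexing equivalence for `HE`. -/
def ehEquiv (A I J : Type*) : A ⊕ (I ⊕ J) ≃ (A ⊕ J) ⊕ I :=
  (Equiv.sumCongr (Equiv.refl A) (Equiv.sumComm I J)).trans (Equiv.sumAssoc A J I).symm

/-- embedding `h ↦ h ⊕ 1_I` into matrices over `A ⊕ (I ⊕ J)`. -/
noncomputable def HE (m : Matrix (A ⊕ J) (A ⊕ J) ℂ) :
    Matrix (A ⊕ (I ⊕ J)) (A ⊕ (I ⊕ J)) ℂ :=
  submatrix (fromBlocks m 0 0 (1 : Matrix I I ℂ)) (ehEquiv A I J) (ehEquiv A I J)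

lemma GE_mul (m m' : Matrix (A ⊕ I) (A ⊕ I) ℂ) :
    GE (J := J) m * GE (J := J) m' = GE (J := J) (m * m') := by
  unfold GE
  rw [submatrix_mul_equiv, fromBlocks_multiply]
  simp

lemma HE_mul (m m' : Matrix (A ⊕ J) (A ⊕ J) ℂ) :
    HE (I := I) m * HE (I := I) m' = HE (I := I) (m * m') := by
  unfold HE
  rw [submatrix_mul_equiv, fromBlocks_multiply]
  simp

lemma GE_one : GE (J := J) (1 : Matrix (A ⊕ I) (A ⊕ I) ℂ) = 1 := by
  unfold GE; rw [fromBlocks_one, submatrix_one_equiv]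

lemma HE_one : HE (I := I) (1 : Matrix (A ⊕ J) (A ⊕ J) ℂ) = 1 := by
  unfold HE; rw [fromBlocks_one, submatrix_one_equiv]

lemma GE_transpose (m : Matrix (A ⊕ I) (A ⊕ I) ℂ) :
    (GE (J := J) m)ᵀ = GE (J := J) mᵀ := by
  unfold GE; rw [transpose_submatrix, fromBlocks_transpose]; simp

lemma HE_transpose (m : Matrix (A ⊕ J) (A ⊕ J) ℂ) :
    (HE (I := I) m)ᵀ = HE (I := I) mᵀ := by
  unfold HE; rw [transpose_submatrix, fromBlocks_transpose]; simp

lemma GE_eq (m : Matrix (A ⊕ I) (A ⊕ I) ℂ) :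
    GE (J := J) m = fromBlocks m.toBlocks₁₁ (fromCols m.toBlocks₁₂ 0)
      (fromRows m.toBlocks₂₁ 0) (fromBlocks m.toBlocks₂₂ 0 0 1) := by
  ext i j
  rcases i with a | i | j' <;> rcases j with a' | i' | j'' <;>
    simp [GE, Equiv.sumAssoc, fromBlocks, fromCols, fromRows_apply_inl, fromRows_apply_inr, toBlocks₁₁,
      toBlocks₁₂, toBlocks₂₁, toBlocks₂₂, one_apply]

lemma HE_eq (m : Matrix (A ⊕ J) (A ⊕ J) ℂ) :
    HE (I := I) m = fromBlocks m.toBlocks₁₁ (fromCols 0 m.toBlocks₁₂)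
      (fromRows 0 m.toBlocks₂₁) (fromBlocks 1 0 0 m.toBlocks₂₂) := by
  ext i j
  rcases i with a | i | j' <;> rcases j with a' | i' | j'' <;>
    simp [HE, ehEquiv, Equiv.sumAssoc, Equiv.sumCongr, Equiv.sumComm, fromBlocks, fromCols,
      fromRows_apply_inl, fromRows_apply_inr, toBlocks₁₁, toBlocks₁₂, toBlocks₂₁, toBlocks₂₂,
      one_apply]

lemma fromColumns_add' {m n₁ n₂ : Type*} (A C : Matrix m n₁ ℂ) (B D : Matrix m n₂ ℂ) :
    fromCols A B + fromCols C D = fromCols (A + C) (B + D) := by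
  ext i j; rcases j with j | j <;> simp [fromCols]

lemma fromRows_add' {m₁ m₂ n : Type*} (A C : Matrix m₁ n ℂ) (B D : Matrix m₂ n ℂ) :
    fromRows A B + fromRows C D = fromRows (A + C) (B + D) := by
  ext i j; rcases i with i | i <;> simp [fromRows_apply_inl, fromRows_apply_inr]

lemma submatrix_sub' {l o m n : Type*} (A B : Matrix m n ℂ) (e₁ : l → m) (e₂ : o → n) :
    submatrix A e₁ e₂ - submatrix B e₁ e₂ = submatrix (A - B) e₁ e₂ := by
  ext i j; simp

lemma fromBlocks_sub' {m₁ m₂ n₁ n₂ : Type*}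
    (A A' : Matrix m₁ n₁ ℂ) (B B' : Matrix m₁ n₂ ℂ)
    (C C' : Matrix m₂ n₁ ℂ) (D D' : Matrix m₂ n₂ ℂ) :
    fromBlocks A B C D - fromBlocks A' B' C' D' =
      fromBlocks (A - A') (B - B') (C - C') (D - D') := by
  ext i j; rcases i with i | i <;> rcases j with j | j <;> simp [fromBlocks]

lemma colProd_eq_mul (g : Matrix (A ⊕ I) (A ⊕ I) ℂ) (h : Matrix (A ⊕ J) (A ⊕ J) ℂ) :
    colProd g h = GE (J := J) g * HE (I := I) h := by
  rw [GE_eq, HE_eq, fromBlocks_multiply, fromCols_mul_fromRows, fromCols_mul_fromBlocks,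
    fromBlocks_mul_fromRows, fromRows_mul_fromCols, fromBlocks_multiply,
    mul_fromCols, fromRows_mul, fromColumns_add', fromRows_add', fromBlocks_add]
  unfold colProd
  simp

lemma colProd_transpose_inv (g : Matrix (A ⊕ I) (A ⊕ I) ℂ) (h : Matrix (A ⊕ J) (A ⊕ J) ℂ)
    (hg : IsUnit g) (hh : IsUnit h) :
    ((colProd g h)ᵀ)⁻¹ = colProd ((gᵀ)⁻¹) ((hᵀ)⁻¹) := by
  apply inv_eq_right_inv
  have hgt : gᵀ * (gᵀ)⁻¹ = 1 :=
    mul_nonsing_inv _ (by rw [det_transpose]; exact hg.map detMonoidHom)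
  have hht : hᵀ * (hᵀ)⁻¹ = 1 :=
    mul_nonsing_inv _ (by rw [det_transpose]; exact hh.map detMonoidHom)
  rw [colProd_eq_mul, colProd_eq_mul, transpose_mul, GE_transpose, HE_transpose,
    mul_assoc, ← mul_assoc (GE (J := J) gᵀ), GE_mul, hgt, GE_one, one_mul, HE_mul, hht, HE_one]

end Emb

section BD
variable {k : ℕ}

/-- the distributivity equivalence used to reindex block-diagonal matrices -/
def epsEquiv (I J : Type*) (k : ℕ) : (I ⊕ J) × Fin k ≃ (I × Fin k) ⊕ (J × Fin k) :=
  Equiv.sumProdDistrib I J (Fin k)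

lemma bd_fromBlocks {I J I' J' : Type*}
    (W : Fin k → Matrix I I' ℂ) (X : Fin k → Matrix I J' ℂ)
    (Y : Fin k → Matrix J I' ℂ) (Z : Fin k → Matrix J J' ℂ) :
    blockDiagonal (fun j => fromBlocks (W j) (X j) (Y j) (Z j)) =
      submatrix (fromBlocks (blockDiagonal W) (blockDiagonal X)
        (blockDiagonal Y) (blockDiagonal Z)) (epsEquiv I J k) (epsEquiv I' J' k) := by
  ext ⟨p, j⟩ ⟨q, j'⟩
  rcases p with p | p <;> rcases q with q | q <;>
    simp [blockDiagonal_apply, epsEquiv, Equiv.sumProdDistrib]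

lemma bd_fromColumns {B I' J' : Type*}
    (X : Fin k → Matrix B I' ℂ) (Y : Fin k → Matrix B J' ℂ) :
    blockDiagonal (fun j => fromCols (X j) (Y j)) =
      submatrix (fromCols (blockDiagonal X) (blockDiagonal Y)) id (epsEquiv I' J' k) := by
  ext ⟨p, j⟩ ⟨q, j'⟩
  rcases q with q | q <;>
    simp [blockDiagonal_apply, fromCols, epsEquiv, Equiv.sumProdDistrib]

lemma bd_fromRows {B I' J' : Type*}
    (X : Fin k → Matrix I' B ℂ) (Y : Fin k → Matrix J' B ℂ) :
    blockDiagonal (fun j => fromRows (X j) (Y j)) =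
      submatrix (fromRows (blockDiagonal X) (blockDiagonal Y)) (epsEquiv I' J' k) id := by
  ext ⟨p, j⟩ ⟨q, j'⟩
  rcases p with p | p <;>
    simp [blockDiagonal_apply, fromRows_apply_inl, fromRows_apply_inr, epsEquiv, Equiv.sumProdDistrib]

lemma sT_sum {I J : Type*} [DecidableEq I] [DecidableEq J] (S : Matrix (Fin k) (Fin k) ℂ) :
    sT (I ⊕ J) S =
      submatrix (fromBlocks (sT I S) 0 0 (sT J S)) (epsEquiv I J k) (epsEquiv I J k) := by
  ext ⟨p, j⟩ ⟨q, j'⟩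
  rcases p with p | p <;> rcases q with q | q <;>
    simp [sT, epsEquiv, Equiv.sumProdDistrib]

end BD

section Blocks
variable {k : ℕ} {A I J : Type*} [Fintype A] [Fintype I] [Fintype J]
  [DecidableEq A] [DecidableEq I] [DecidableEq J]
  (g : Fin k → Matrix (A ⊕ I) (A ⊕ I) ℂ) (h : Fin k → Matrix (A ⊕ J) (A ⊕ J) ℂ)

lemma aT_colProd : aT (fun j => colProd (g j) (h j)) = aT g * aT h := by
  unfold aT colProd
  simp only [toBlocks_fromBlocks₁₁, blockDiagonal_mul]

lemma bT_colProd : bT (fun j => colProd (g j) (h j)) =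
    submatrix (fromCols (bT g) (aT g * bT h)) id (epsEquiv I J k) := by
  unfold bT colProd
  simp only [toBlocks_fromBlocks₁₂]
  rw [bd_fromColumns]
  simp only [aT, bT, ← blockDiagonal_mul]

lemma cT_colProd : cT (fun j => colProd (g j) (h j)) =
    submatrix (fromRows (cT g * aT h) (cT h)) (epsEquiv I J k) id := by
  unfold cT colProd
  simp only [toBlocks_fromBlocks₂₁]
  rw [bd_fromRows]
  simp only [aT, cT, ← blockDiagonal_mul]

lemma dT_colProd : dT (fun j => colProd (g j) (h j)) =
    submatrix (fromBlocks (dT g) (cT g * bT h) 0 (dT h)) (epsEquiv I J k) (epsEquiv I J k) := by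
  unfold dT colProd
  simp only [toBlocks_fromBlocks₂₂]
  rw [bd_fromBlocks]
  simp only [dT, bT, cT, ← blockDiagonal_mul]
  rw [show (fun _ : Fin k => (0 : Matrix J I ℂ)) = 0 from rfl, blockDiagonal_zero]

end Blocks

end Chi2vAux
open Chi2vAux in
/-- multiplicativity of the two-variable characteristic function:
`χ(𝔄∘𝔓; S, R) = χ(𝔄; S, R)·χ(𝔓; S, R)`, where `𝔄∘𝔓` is the elementwise product
of the two families of colligations. -/
theorem chi2v_mul {α N M k : ℕ}
    (g : Fin k → Matrix (Fin α ⊕ Fin N) (Fin α ⊕ Fin N) ℂ)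
    (h : Fin k → Matrix (Fin α ⊕ Fin M) (Fin α ⊕ Fin M) ℂ)
    (hg : ∀ j, IsUnit (g j)) (hh : ∀ j, IsUnit (h j))
    (S R : Matrix (Fin k) (Fin k) ℂ)
    (hEg : IsUnit (EMat g S R)) (hEh : IsUnit (EMat h S R)) :
    IsUnit (EMat (fun j => colProd (g j) (h j)) S R) ∧
      chi2v (fun j => colProd (g j) (h j)) S R = chi2v g S R * chi2v h S R := by
  have hfP : gP (fun j => colProd (g j) (h j)) = fun j => colProd (gP g j) (gP h j) :=
    funext fun j => colProd_transpose_inv (g j) (h j) (hg j) (hh j)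
  set ε := epsEquiv (Fin N) (Fin M) k with hε
  set X : Matrix (Fin N × Fin k) (Fin M × Fin k) ℂ :=
    cT g * bT h - sT (Fin N) S * (cT (gP g) * bT (gP h)) * sT (Fin M) R with hX
  have hdTP : dT (gP (fun j => colProd (g j) (h j))) =
      submatrix (fromBlocks (dT (gP g)) (cT (gP g) * bT (gP h)) 0 (dT (gP h))) ε ε := by
    rw [hfP]; exact dT_colProd _ _
  have hE : EMat (fun j => colProd (g j) (h j)) S R
      = submatrix (fromBlocks (EMat g S R) X 0 (EMat h S R)) ε ε := by
    show dT _ - sT _ S * dT (gP _) * sT _ R = _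
    rw [dT_colProd, hdTP, sT_sum S, sT_sum R, ← hε, submatrix_mul_equiv,
      submatrix_mul_equiv, submatrix_sub']
    rw [fromBlocks_multiply, fromBlocks_multiply, fromBlocks_sub']
    simp only [EMat, Matrix.mul_zero, Matrix.zero_mul, add_zero, zero_add, sub_zero]
    rfl
  have hEu : IsUnit (EMat (fun j => colProd (g j) (h j)) S R) := by
    rw [Matrix.isUnit_iff_isUnit_det, hE, det_submatrix_equiv_self,
      ← Matrix.isUnit_iff_isUnit_det]
    exact isUnit_fromBlocks_zero₂₁.mpr ⟨hEg, hEh⟩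
  refine ⟨hEu, ?_⟩
  have hEi : (EMat (fun j => colProd (g j) (h j)) S R)⁻¹
      = submatrix (fromBlocks (EMat g S R)⁻¹
          (-((EMat g S R)⁻¹ * X * (EMat h S R)⁻¹)) 0 (EMat h S R)⁻¹) ε ε := by
    rw [hE, inv_submatrix_equiv,
      inv_fromBlocks_zero₂₁_of_isUnit_iff _ _ _ (iff_of_true hEg hEh)]
  have haP : aT (gP (fun j => colProd (g j) (h j))) = aT (gP g) * aT (gP h) := by
    rw [hfP]; exact aT_colProd _ _
  have hbP : bT (gP (fun j => colProd (g j) (h j))) =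
      submatrix (fromCols (bT (gP g)) (aT (gP g) * bT (gP h))) id ε := by
    rw [hfP]; exact bT_colProd _ _
  have hcP : cT (gP (fun j => colProd (g j) (h j))) =
      submatrix (fromRows (cT (gP g) * aT (gP h)) (cT (gP h))) ε id := by
    rw [hfP]; exact cT_colProd _ _
  rw [chi2v, chi2v, chi2v, fromBlocks_multiply, aT_colProd, bT_colProd, cT_colProd,
    hEi, haP, hbP, hcP, sT_sum S, sT_sum R, ← hε]
  simp only [submatrix_mul_equiv, submatrix_id_id]
  rw [fromBlocks_inj]
  refine ⟨?_, ?_, ?_, ?_⟩ <;>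
  · simp only [fromCols_mul_fromBlocks, fromCols_mul_fromRows, hX, Matrix.mul_zero,
      Matrix.zero_mul, add_zero, zero_add, Matrix.mul_sub, Matrix.sub_mul, Matrix.mul_add,
      Matrix.add_mul, Matrix.mul_neg, Matrix.neg_mul, neg_neg, neg_sub, Matrix.mul_assoc]
    abel
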